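/- Consider the average-appraisal workload dynamics ẇᵢ = −wᵢ + (1/n)∑ₖ a_{ki}(t) where A(t) is row-stochastic for all t and the zero pattern of A(t) is constant in time (a_{ki}(t) = 0 whenever a_{ki}(0) = 0). If there exists an index i with w^opt_i > max{ (1/n)∑ₖ ⌈a_{ki}(0)⌉, wᵢ(0) }, then wᵢ(t) < w^opt_i for all t ≥ 0, i.e. the trajectory never reaches w^opt. -/

import Mathlib

/-- Failure to learn for the average-appraisal work flow: if some agent's
optimal workload exceeds both 1/n times its in-degree and its initial
workload, then its workload stays strictly below the optimum forever. -/
theorem stmt_18 (n : ℕ) (hn : 0 < n) (A : ℝ → Matrix (Fin n) (Fin n) ℝ)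
    (hAnonneg : ∀ t k i, 0 ≤ A t k i)
    (hArow : ∀ t k, ∑ i, A t k i = 1)
    (hpattern : ∀ t k i, A 0 k i = 0 → A t k i = 0)
    (w : ℝ → Fin n → ℝ)
    (hderiv : ∀ t i, HasDerivAt (fun s => w s i)
      (-(w t i) + (1 / (n : ℝ)) * ∑ k, A t k i) t)
    (wopt : Fin n → ℝ) (i : Fin n)
    (hcond : max ((1 / (n : ℝ)) * ∑ k, (⌈A 0 k i⌉ : ℝ)) (w 0 i) < wopt i) :
    ∀ t, 0 ≤ t → w t i < wopt i := by
  set M : ℝ := max ((1 / (n : ℝ)) * ∑ k, (⌈A 0 k i⌉ : ℝ)) (w 0 i) with hM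
  -- entrywise bound: A t k i ≤ ⌈A 0 k i⌉
  have hentry : ∀ t k, A t k i ≤ (⌈A 0 k i⌉ : ℝ) := by
    intro t k
    rcases eq_or_lt_of_le (hAnonneg 0 k i) with h0 | h0
    · rw [hpattern t k i h0.symm, ← h0]
      simp
    · have h1 : (1 : ℝ) ≤ (⌈A 0 k i⌉ : ℝ) := by
        exact_mod_cast Int.ceil_pos.mpr h0
      have hle1 : A t k i ≤ 1 := by
        calc A t k i ≤ ∑ j, A t k j :=
          Finset.single_le_sum (fun j _ => hAnonneg t k j) (Finset.mem_univ i)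
        _ = 1 := hArow t k
      linarith
  -- the drive term is ≤ M
  have hdrive : ∀ t, (1 / (n : ℝ)) * ∑ k, A t k i ≤ M := by
    intro t
    have : ∑ k, A t k i ≤ ∑ k, (⌈A 0 k i⌉ : ℝ) :=
      Finset.sum_le_sum fun k _ => hentry t k
    have hpos : (0 : ℝ) ≤ 1 / (n : ℝ) := by positivity
    calc (1 / (n : ℝ)) * ∑ k, A t k i ≤ (1 / (n : ℝ)) * ∑ k, (⌈A 0 k i⌉ : ℝ) :=
        mul_le_mul_of_nonneg_left this hpos
      _ ≤ M := le_max_left _ _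
  -- f t = (w t i - M) * exp t is antitone
  have hf : Antitone (fun t => (w t i - M) * Real.exp t) := by
    apply antitone_of_deriv_nonpos
    · intro t
      exact (((hderiv t i).sub_const M).mul (Real.hasDerivAt_exp t)).differentiableAt
    · intro t
      have h : HasDerivAt (fun t => (w t i - M) * Real.exp t)
          ((-(w t i) + (1 / (n : ℝ)) * ∑ k, A t k i) * Real.exp t + (w t i - M) * Real.exp t) t :=
        ((hderiv t i).sub_const M).mul (Real.hasDerivAt_exp t)
      rw [h.deriv]
      have heq : (-(w t i) + (1 / (n : ℝ)) * ∑ k, A t k i) * Real.exp t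
          + (w t i - M) * Real.exp t
          = ((1 / (n : ℝ)) * ∑ k, A t k i - M) * Real.exp t := by ring
      rw [heq]
      have := hdrive t
      nlinarith [Real.exp_pos t]
  intro t ht
  have h0 : (w 0 i - M) * Real.exp 0 ≤ 0 := by
    have : w 0 i ≤ M := le_max_right _ _
    simp only [Real.exp_zero, mul_one]
    linarith
  have hft : (w t i - M) * Real.exp t ≤ 0 := (hf ht).trans h0
  have hexp := Real.exp_pos t
  nlinarith
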